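/- Let α, β be real numbers, neither of which is a non-positive integer, let z ≠ 0 be real, and set a_m = (α)_m (β)_m / (−z)^m, s_n = Σ_{m=0}^n a_m, N_n^{(0)} = s_n/a_{n+1} and N_n^{(1)} = s_{n+1}/a_{n+2} − s_n/a_{n+1}. Then for every integer n ≥ 0, (α+n+1)(β+n+1) N_n^{(1)} + [ z + (α+n+1)(β+n+1) ] N_n^{(0)} + z = 0; equivalently, N_n^{(1)} = s_n D_n^{(1)} + a_{n+1}/a_{n+2}, where D_n^{(1)} = 1/a_{n+2} − 1/a_{n+1}. -/

import Mathlib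

/-- The Pochhammer symbol (rising factorial) `(x)_n = x(x+1)⋯(x+n−1)`, with `(x)_0 = 1`. -/
noncomputable def poch (x : ℝ) : ℕ → ℝ
  | 0 => 1
  | n + 1 => poch x n * (x + n)

lemma poch_ne_zero (x : ℝ) (hx : ∀ m : ℕ, x ≠ -(m : ℝ)) : ∀ n, poch x n ≠ 0 := by
  intro n
  induction n with
  | zero => simp [poch]
  | succ k ih =>
    have : x + k ≠ 0 := by
      intro h
      exact hx k (by linarith)
    simpa [poch] using mul_ne_zero ih this

/-- With `a_m = (α)_m (β)_m / (−z)^m`, `s_n = Σ_{m=0}^n a_m`,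
`N_n^{(0)} = s_n/a_{n+1}` and `N_n^{(1)} = s_{n+1}/a_{n+2} − s_n/a_{n+1}`, for every `n ≥ 0`,
`(α+n+1)(β+n+1) N_n^{(1)} + [z + (α+n+1)(β+n+1)] N_n^{(0)} + z = 0`; equivalently,
`N_n^{(1)} = s_n D_n^{(1)} + a_{n+1}/a_{n+2}`, where `D_n^{(1)} = 1/a_{n+2} − 1/a_{n+1}`. -/
theorem drummond_numerator_initial
    (α β z : ℝ) (hα : ∀ m : ℕ, α ≠ -(m : ℝ)) (hβ : ∀ m : ℕ, β ≠ -(m : ℝ)) (hz : z ≠ 0)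
    (a : ℕ → ℝ) (ha : ∀ m : ℕ, a m = poch α m * poch β m / (-z) ^ m)
    (s : ℕ → ℝ) (hs : ∀ n : ℕ, s n = ∑ m ∈ Finset.range (n + 1), a m)
    (N0 N1 : ℕ → ℝ)
    (hN0 : ∀ n : ℕ, N0 n = s n / a (n + 1))
    (hN1 : ∀ n : ℕ, N1 n = s (n + 1) / a (n + 2) - s n / a (n + 1)) :
    ∀ n : ℕ,
      (α + n + 1) * (β + n + 1) * N1 n + (z + (α + n + 1) * (β + n + 1)) * N0 n + z = 0 ∧
      N1 n = s n * (1 / a (n + 2) - 1 / a (n + 1)) + a (n + 1) / a (n + 2) := by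
  have hznz : (-z) ≠ 0 := neg_ne_zero.mpr hz
  have hane : ∀ m, a m ≠ 0 := by
    intro m
    rw [ha]
    exact div_ne_zero (mul_ne_zero (poch_ne_zero α hα m) (poch_ne_zero β hβ m))
      (pow_ne_zero m hznz)
  have hratio : ∀ m : ℕ, a (m + 1) * (-z) = a m * ((α + m) * (β + m)) := by
    intro m
    rw [ha, ha]
    show poch α m * (α + m) * (poch β m * (β + m)) / (-z) ^ (m + 1) * (-z) = _
    field_simp [pow_succ]
    ring
  intro n
  have key : a (n + 2) * (-z) = a (n + 1) * ((α + n + 1) * (β + n + 1)) := by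
    have := hratio (n + 1)
    push_cast at this ⊢
    convert this using 3 <;> ring
  have hssucc : s (n + 1) = s n + a (n + 1) := by
    rw [hs, hs, Finset.sum_range_succ]
  have h1 : a (n + 1) ≠ 0 := hane (n + 1)
  have h2 : a (n + 2) ≠ 0 := hane (n + 2)
  constructor
  · rw [hN1, hN0, hssucc]
    field_simp
    linear_combination (-(s n + a (n + 1))) * key
  · rw [hN1, hssucc]
    field_simp
    ring
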